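/- The distortion error of the two-point set {(1/6, 3/4), (5/6, 3/4)} equals 31/288, i.e., ∫ min_{c ∈ α} ‖x − c‖² dP(x) = 31/288 where α = {(1/6,3/4), (5/6,3/4)}. -/

import Mathlib

open MeasureTheory ProbabilityTheory
open scoped ENNReal

noncomputable section

abbrev E2 : Type := EuclideanSpace ℝ (Fin 2)

/-- The point (a,b) of the Euclidean plane. -/
def pt (a b : ℝ) : E2 := (WithLp.equiv 2 (Fin 2 → ℝ)).symm ![a, b]

/-- The four generating similarities S₁,…,S₄ (indexed 0,…,3) of the Sierpiński carpet. -/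
def S : Fin 4 → E2 → E2
  | 0 => fun x => pt (x 0 / 3) (x 1 / 3)
  | 1 => fun x => pt (x 0 / 3 + 2/3) (x 1 / 3)
  | 2 => fun x => pt (x 0 / 3) (x 1 / 3 + 2/3)
  | 3 => fun x => pt (x 0 / 3 + 2/3) (x 1 / 3 + 2/3)

/-- The self-affinity equation P = (1/8)P∘S₁⁻¹ + (1/8)P∘S₂⁻¹ + (3/8)P∘S₃⁻¹ + (3/8)P∘S₄⁻¹. -/
def carpetEq (P : Measure E2) : Prop :=
  P = (1/8 : ℝ≥0∞) • P.map (S 0) + (1/8 : ℝ≥0∞) • P.map (S 1)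
    + (3/8 : ℝ≥0∞) • P.map (S 2) + (3/8 : ℝ≥0∞) • P.map (S 3)

/-- The unit square [0,1]². -/
def unitSq : Set E2 := {x | ∀ i, x i ∈ Set.Icc (0:ℝ) 1}

/-- S_ω = S_{ω₁} ∘ ⋯ ∘ S_{ω_k} for a word ω. -/
def Sw (w : List (Fin 4)) : E2 → E2 := fun x => w.foldr S x

/-- The basic square J_ω = S_ω([0,1]²). -/
def Jw (w : List (Fin 4)) : Set E2 := Sw w '' unitSq

/-- The basic square J_i of the first level. -/
def Jset (i : Fin 4) : Set E2 := S i '' unitSq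

/-- The mass centroid (conditional expectation) of P on a set A. -/
def ctr (P : Measure E2) (A : Set E2) : E2 := (P A).toReal⁻¹ • ∫ x in A, x ∂P

/-- E(ω) : distortion error on J_ω about its centroid a(ω) = S_ω(1/2,3/4). -/
def Err (P : Measure E2) (w : List (Fin 4)) : ℝ :=
  ∫ x in Jw w, ‖x - Sw w (pt (1/2) (3/4))‖^2 ∂P

/-- E(ωi, ωj) : distortion error on J_{ωi} ∪ J_{ωj} about its centroid. -/
def Epair (P : Measure E2) (w : List (Fin 4)) (i j : Fin 4) : ℝ :=
  ∫ x in (Jw (w ++ [i]) ∪ Jw (w ++ [j])),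
    ‖x - ctr P (Jw (w ++ [i]) ∪ Jw (w ++ [j]))‖^2 ∂P

def cS : Fin 4 → Fin 2 → ℝ
  | 0, _ => 0
  | 1, 0 => 2/3
  | 1, 1 => 0
  | 2, 0 => 0
  | 2, 1 => 2/3
  | 3, _ => 2/3

lemma E2ext (y z : E2) (h : ∀ i, y i = z i) : y = z := WithLp.ofLp_injective 2 (funext h)

lemma cS_nonneg (k : Fin 4) (i : Fin 2) : 0 ≤ cS k i := by
  fin_cases k <;> fin_cases i <;> norm_num [cS]

lemma cS_le (k : Fin 4) (i : Fin 2) : cS k i ≤ 2/3 := by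
  fin_cases k <;> fin_cases i <;> norm_num [cS]

lemma S_apply (k : Fin 4) (x : E2) (i : Fin 2) : S k x i = x i / 3 + cS k i := by
  fin_cases k <;> fin_cases i <;> norm_num [S, cS, pt] <;> rfl

lemma S_eq (k : Fin 4) : S k = fun x : E2 => pt (x 0 / 3 + cS k 0) (x 1 / 3 + cS k 1) := by
  funext x
  apply E2ext
  intro i
  rw [S_apply]
  fin_cases i <;> rfl

lemma continuous_coord (i : Fin 2) : Continuous (fun x : E2 => x i) :=
  (EuclideanSpace.proj i).continuous

lemma continuous_S (k : Fin 4) : Continuous (S k) := by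
  rw [S_eq]
  apply Continuous.comp (PiLp.continuous_toLp (p := 2) (β := fun _ : Fin 2 => ℝ))
  apply continuous_pi
  intro i
  fin_cases i
  · exact ((continuous_coord 0).div_const 3).add continuous_const
  · exact ((continuous_coord 1).div_const 3).add continuous_const

lemma measurable_S (k : Fin 4) : Measurable (S k) := (continuous_S k).measurable

lemma measurableSet_lt_coord (i : Fin 2) (r : ℝ) : MeasurableSet {x : E2 | x i < r} :=
  measurableSet_lt ((continuous_coord i).measurable) measurable_const

lemma measurableSet_coord_lt (i : Fin 2) (r : ℝ) : MeasurableSet {x : E2 | r < x i} :=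
  measurableSet_lt measurable_const ((continuous_coord i).measurable)

lemma measure_eq (P : Measure E2) (hP : carpetEq P) {A : Set E2} (hA : MeasurableSet A) :
    P A = 1/8 * P (S 0 ⁻¹' A) + 1/8 * P (S 1 ⁻¹' A) + 3/8 * P (S 2 ⁻¹' A) + 3/8 * P (S 3 ⁻¹' A) := by
  conv_lhs => rw [hP]
  simp [Measure.add_apply, Measure.smul_apply, Measure.map_apply (measurable_S _) hA, smul_eq_mul]

lemma measure_step (P : Measure E2) (hP : carpetEq P) {A B : Set E2} (hA : MeasurableSet A)
    (h : ∀ k : Fin 4, S k ⁻¹' A ⊆ B) : P A ≤ P B := by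
  rw [measure_eq P hP hA]
  calc 1/8 * P (S 0 ⁻¹' A) + 1/8 * P (S 1 ⁻¹' A) + 3/8 * P (S 2 ⁻¹' A) + 3/8 * P (S 3 ⁻¹' A)
      ≤ 1/8 * P B + 1/8 * P B + 3/8 * P B + 3/8 * P B := by
        gcongr <;> exact h _
    _ = (1/8 + 1/8 + 3/8 + 3/8) * P B := by ring
    _ = P B := by
        have : (1/8 + 1/8 + 3/8 + 3/8 : ℝ≥0∞) = 1 := by
          rw [ENNReal.div_add_div_same, ENNReal.div_add_div_same, ENNReal.div_add_div_same]
          norm_num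
          exact ENNReal.div_self (by norm_num) (by norm_num)
        rw [this, one_mul]

lemma upper_step (P : Measure E2) (hP : carpetEq P) (i : Fin 2) {r : ℝ} (hr : 1 ≤ r) :
    P {x : E2 | r < x i} ≤ P {x : E2 | 3*r - 2 < x i} := by
  apply measure_step P hP (measurableSet_coord_lt i r)
  intro k x hx
  simp only [Set.mem_preimage, Set.mem_setOf_eq, S_apply] at hx ⊢
  have := cS_le k i
  linarith

lemma upper_null (P : Measure E2) [IsProbabilityMeasure P] (hP : carpetEq P) (i : Fin 2) {r : ℝ}
    (hr : 1 < r) : P {x : E2 | r < x i} = 0 := by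
  set B : ℕ → Set E2 := fun n => {x : E2 | 3^n*(r-1)+1 < x i} with hB
  have key : ∀ n, P {x : E2 | r < x i} ≤ P (B n) := by
    intro n
    induction n with
    | zero =>
      have : (3:ℝ)^0*(r-1)+1 = r := by ring
      simp only [hB, this, le_refl]
    | succ n ih =>
      refine ih.trans ?_
      have h3 : (0:ℝ) < 3^n := pow_pos (by norm_num) n
      have h1 : (1:ℝ) ≤ 3^n*(r-1)+1 := by nlinarith
      have h2 := upper_step P hP i h1
      have heq : (3:ℝ)*(3^n*(r-1)+1)-2 = 3^(n+1)*(r-1)+1 := by ring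
      rw [heq] at h2
      exact h2
  have hanti : Antitone B := by
    intro m n hmn x hx
    simp only [hB, Set.mem_setOf_eq] at hx ⊢
    have : (3:ℝ)^m ≤ 3^n := pow_le_pow_right₀ (by norm_num) hmn
    nlinarith [hx]
  have hempty : ⋂ n, B n = ∅ := by
    ext x
    simp only [hB, Set.mem_iInter, Set.mem_setOf_eq, Set.mem_empty_iff_false, iff_false, not_forall, not_lt]
    obtain ⟨n, hn⟩ := pow_unbounded_of_one_lt ((x i - 1)/(r-1)) (by norm_num : (1:ℝ) < 3)
    refine ⟨n, ?_⟩
    have hr1 : (0:ℝ) < r - 1 := by linarith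
    rw [div_lt_iff₀ hr1] at hn
    linarith
  have hinter := Directed.measure_iInter (μ := P)
    (fun n => (measurableSet_coord_lt i _).nullMeasurableSet)
    (hanti.directed_ge) ⟨0, measure_ne_top P _⟩
  rw [hempty] at hinter
  simp only [measure_empty] at hinter
  have : P {x : E2 | r < x i} ≤ 0 := hinter ▸ le_iInf key
  exact le_antisymm this zero_le

lemma lower_step (P : Measure E2) (hP : carpetEq P) (i : Fin 2) {r : ℝ} (hr : r ≤ 0) :
    P {x : E2 | x i < r} ≤ P {x : E2 | x i < 3*r} := by
  apply measure_step P hP (measurableSet_lt_coord i r)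
  intro k x hx
  simp only [Set.mem_preimage, Set.mem_setOf_eq, S_apply] at hx ⊢
  have := cS_nonneg k i
  linarith

lemma lower_null (P : Measure E2) [IsProbabilityMeasure P] (hP : carpetEq P) (i : Fin 2) {r : ℝ}
    (hr : r < 0) : P {x : E2 | x i < r} = 0 := by
  set B : ℕ → Set E2 := fun n => {x : E2 | x i < 3^n*r} with hB
  have key : ∀ n, P {x : E2 | x i < r} ≤ P (B n) := by
    intro n
    induction n with
    | zero =>
      have : (3:ℝ)^0*r = r := by ring
      simp only [hB, this, le_refl]
    | succ n ih =>
      refine ih.trans ?_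
      have h3 : (0:ℝ) < 3^n := pow_pos (by norm_num) n
      have h1 : (3:ℝ)^n*r ≤ 0 := by nlinarith
      have h2 := lower_step P hP i h1
      have heq : (3:ℝ)*(3^n*r) = 3^(n+1)*r := by ring
      rw [heq] at h2
      exact h2
  have hanti : Antitone B := by
    intro m n hmn x hx
    simp only [hB, Set.mem_setOf_eq] at hx ⊢
    have : (3:ℝ)^m ≤ 3^n := pow_le_pow_right₀ (by norm_num) hmn
    nlinarith [hx]
  have hempty : ⋂ n, B n = ∅ := by
    ext x
    simp only [hB, Set.mem_iInter, Set.mem_setOf_eq, Set.mem_empty_iff_false, iff_false,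
      not_forall, not_lt]
    obtain ⟨n, hn⟩ := pow_unbounded_of_one_lt ((x i)/r) (by norm_num : (1:ℝ) < 3)
    refine ⟨n, ?_⟩
    rw [div_lt_iff_of_neg hr] at hn
    linarith
  have hinter := Directed.measure_iInter (μ := P)
    (fun n => (measurableSet_lt_coord i _).nullMeasurableSet)
    (hanti.directed_ge) ⟨0, measure_ne_top P _⟩
  rw [hempty] at hinter
  simp only [measure_empty] at hinter
  have : P {x : E2 | x i < r} ≤ 0 := hinter ▸ le_iInf key
  exact le_antisymm this zero_le

lemma ae_unitSq (P : Measure E2) [IsProbabilityMeasure P] (hP : carpetEq P) :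
    ∀ᵐ x ∂P, x ∈ unitSq := by
  have h1 : ∀ i : Fin 2, P {x : E2 | x i < 0} = 0 := by
    intro i
    have : {x : E2 | x i < 0} = ⋃ n : ℕ, {x : E2 | x i < -(1/(n+1))} := by
      ext x
      simp only [Set.mem_setOf_eq, Set.mem_iUnion]
      constructor
      · intro hx
        obtain ⟨n, hn⟩ := exists_nat_gt (1 / (-(x i)))
        refine ⟨n, ?_⟩
        have hxi : 0 < -(x i) := by linarith
        rw [div_lt_iff₀ hxi] at hn
        have hn1 : (0:ℝ) < n + 1 := by positivity
        have h' : 1/(↑n+1) < -x i := by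
          rw [div_lt_iff₀ hn1]; nlinarith
        linarith
      · rintro ⟨n, hn⟩
        have : (0:ℝ) < 1/(n+1) := by positivity
        linarith
    rw [this]
    refine measure_iUnion_null fun n => lower_null P hP i ?_
    have : (0:ℝ) < 1/(n+1) := by positivity
    linarith
  have h2 : ∀ i : Fin 2, P {x : E2 | 1 < x i} = 0 := by
    intro i
    have : {x : E2 | 1 < x i} = ⋃ n : ℕ, {x : E2 | 1 + 1/(n+1) < x i} := by
      ext x
      simp only [Set.mem_setOf_eq, Set.mem_iUnion]
      constructor
      · intro hx
        obtain ⟨n, hn⟩ := exists_nat_gt (1 / (x i - 1))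
        refine ⟨n, ?_⟩
        have hxi : 0 < x i - 1 := by linarith
        rw [div_lt_iff₀ hxi] at hn
        have hn1 : (0:ℝ) < n + 1 := by positivity
        have h' : 1/(↑n+1) < x i - 1 := by
          rw [div_lt_iff₀ hn1]; nlinarith
        linarith
      · rintro ⟨n, hn⟩
        have : (0:ℝ) < 1/(n+1) := by positivity
        linarith
    rw [this]
    refine measure_iUnion_null fun n => upper_null P hP i ?_
    have : (0:ℝ) < 1/(n+1) := by positivity
    linarith
  have hcompl : P unitSqᶜ = 0 := by
    have hsub : unitSqᶜ ⊆ (⋃ i : Fin 2, ({x : E2 | x i < 0} ∪ {x : E2 | 1 < x i})) := by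
      intro x hx
      simp only [unitSq, Set.mem_compl_iff, Set.mem_setOf_eq, not_forall] at hx
      obtain ⟨i, hi⟩ := hx
      simp only [Set.mem_Icc, not_and_or, not_le] at hi
      simp only [Set.mem_iUnion, Set.mem_union, Set.mem_setOf_eq]
      exact ⟨i, hi⟩
    refine measure_mono_null hsub (measure_iUnion_null fun i => ?_)
    rw [measure_union_null_iff]  -- check name
    exact ⟨h1 i, h2 i⟩
  exact ae_iff.mpr hcompl

lemma intg (P : Measure E2) [IsProbabilityMeasure P] (hP : carpetEq P) {f : E2 → ℝ} (C : ℝ)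
    (hf : Continuous f) (hC : ∀ x ∈ unitSq, |f x| ≤ C) : Integrable f P :=
  Integrable.mono' (integrable_const C) hf.aestronglyMeasurable
    ((ae_unitSq P hP).mono fun x hx => by simpa [Real.norm_eq_abs] using hC x hx)

lemma int_transform (P : Measure E2) [IsProbabilityMeasure P] (hP : carpetEq P) {f : E2 → ℝ}
    (hfc : Continuous f) (hfi : Integrable f P) :
    ∫ x, f x ∂P = (1/8)*∫ x, f (S 0 x) ∂P + (1/8)*∫ x, f (S 1 x) ∂P
      + (3/8)*∫ x, f (S 2 x) ∂P + (3/8)*∫ x, f (S 3 x) ∂P := by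
  have hmap : ∀ k : Fin 4, ∫ x, f x ∂(P.map (S k)) = ∫ x, f (S k x) ∂P := fun k =>
    integral_map (measurable_S k).aemeasurable hfc.aestronglyMeasurable
  have hfi' : Integrable f ((((1/8:ℝ≥0∞) • P.map (S 0) + (1/8:ℝ≥0∞) • P.map (S 1))
      + (3/8:ℝ≥0∞) • P.map (S 2)) + (3/8:ℝ≥0∞) • P.map (S 3)) := hP ▸ hfi
  obtain ⟨h123, h4⟩ := integrable_add_measure.mp hfi'
  obtain ⟨h12, h3⟩ := integrable_add_measure.mp h123
  obtain ⟨h1, h2⟩ := integrable_add_measure.mp h12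
  conv_lhs => rw [hP]
  rw [integral_add_measure h123 h4, integral_add_measure h12 h3, integral_add_measure h1 h2,
    integral_smul_measure, integral_smul_measure, integral_smul_measure, integral_smul_measure,
    hmap 0, hmap 1, hmap 2, hmap 3]
  have e1 : ((1/8:ℝ≥0∞)).toReal = (1/8 : ℝ) := by
    rw [ENNReal.toReal_div]; norm_num
  have e3 : ((3/8:ℝ≥0∞)).toReal = (3/8 : ℝ) := by
    rw [ENNReal.toReal_div]; norm_num
  rw [e1, e3, smul_eq_mul, smul_eq_mul, smul_eq_mul, smul_eq_mul]

variable (P : Measure E2) [IsProbabilityMeasure P]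

lemma integrable_coord (hP : carpetEq P) (i : Fin 2) : Integrable (fun x : E2 => x i) P := by
  refine intg P hP 1 (continuous_coord i) fun x hx => ?_
  have := hx i
  rw [abs_le]; constructor <;> [linarith [this.1]; exact this.2]

lemma integrable_coord_sq (hP : carpetEq P) (i : Fin 2) : Integrable (fun x : E2 => (x i)^2) P := by
  refine intg P hP 1 ((continuous_coord i).pow 2) fun x hx => ?_
  have := hx i
  rw [abs_le]; constructor <;> nlinarith [this.1, this.2]

lemma moment1 (hP : carpetEq P) (i : Fin 2) : ∫ x : E2, x i ∂P
    = (3/2) * ((1/8)*cS 0 i + (1/8)*cS 1 i + (3/8)*cS 2 i + (3/8)*cS 3 i) := by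
  have key := int_transform P hP (continuous_coord i) (integrable_coord P hP i)
  have hk : ∀ k : Fin 4, ∫ x : E2, (S k x) i ∂P = (1/3) * ∫ x : E2, x i ∂P + cS k i := by
    intro k
    simp only [S_apply]
    rw [integral_add ((integrable_coord P hP i).div_const 3) (integrable_const _),
      integral_div, integral_const]
    simp [measure_univ]
    ring
  rw [hk 0, hk 1, hk 2, hk 3] at key
  linarith

lemma moment1_0 (hP : carpetEq P) : ∫ x : E2, x 0 ∂P = 1/2 := by
  have := moment1 P hP 0; norm_num [cS] at this; linarith

lemma moment1_1 (hP : carpetEq P) : ∫ x : E2, x 1 ∂P = 3/4 := by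
  have := moment1 P hP 1; norm_num [cS] at this; linarith

lemma moment2 (hP : carpetEq P) (i : Fin 2) : ∫ x : E2, (x i)^2 ∂P
    = (9/8) * ((1/8)*((2*cS 0 i/3)*(∫ x : E2, x i ∂P) + (cS 0 i)^2)
      + (1/8)*((2*cS 1 i/3)*(∫ x : E2, x i ∂P) + (cS 1 i)^2)
      + (3/8)*((2*cS 2 i/3)*(∫ x : E2, x i ∂P) + (cS 2 i)^2)
      + (3/8)*((2*cS 3 i/3)*(∫ x : E2, x i ∂P) + (cS 3 i)^2)) := by
  have key := int_transform P hP (f := fun x : E2 => (x i)^2) ((continuous_coord i).pow 2) (integrable_coord_sq P hP i)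
  have hk : ∀ k : Fin 4, ∫ x : E2, ((S k x) i)^2 ∂P
      = (1/9) * ∫ x : E2, (x i)^2 ∂P + ((2*cS k i/3)*(∫ x : E2, x i ∂P) + (cS k i)^2) := by
    intro k
    simp only [S_apply]
    have hfe : (fun x : E2 => (x i/3 + cS k i)^2)
        = fun x : E2 => (1/9)*(x i)^2 + ((2*cS k i/3)*(x i) + (cS k i)^2) := by
      funext x; ring
    have ha : Integrable (fun x : E2 => 1/9*(x i)^2) P := (integrable_coord_sq P hP i).const_mul _
    have hb : Integrable (fun x : E2 => 2*cS k i/3*(x i) + (cS k i)^2) P :=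
      ((integrable_coord P hP i).const_mul _).add (integrable_const _)
    have hc : Integrable (fun x : E2 => 2*cS k i/3*(x i)) P := (integrable_coord P hP i).const_mul _
    rw [hfe, integral_add ha hb, integral_const_mul, integral_add hc (integrable_const _),
      integral_const_mul, integral_const]
    simp [measure_univ]
  rw [hk 0, hk 1, hk 2, hk 3] at key
  linarith

lemma moment2_0 (hP : carpetEq P) : ∫ x : E2, (x 0)^2 ∂P = 3/8 := by
  have := moment2 P hP 0; rw [moment1_0 P hP] at this; norm_num [cS] at this; linarith

lemma moment2_1 (hP : carpetEq P) : ∫ x : E2, (x 1)^2 ∂P = 21/32 := by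
  have := moment2 P hP 1; rw [moment1_1 P hP] at this; norm_num [cS] at this; linarith

lemma cS_cases (k : Fin 4) (i : Fin 2) : cS k i = 0 ∨ cS k i = 2/3 := by
  fin_cases k <;> fin_cases i <;> norm_num [cS]

lemma continuous_abs01 : Continuous (fun x : E2 => |2*x 0 - 1|) :=
  ((continuous_const.mul (continuous_coord 0)).sub continuous_const).abs

lemma integrable_abs01 (hP : carpetEq P) : Integrable (fun x : E2 => |2*x 0 - 1|) P := by
  refine intg P hP 1 continuous_abs01 fun x hx => ?_
  have h := hx 0
  rw [abs_abs, abs_le]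
  constructor <;> linarith [h.1, h.2]

lemma momentA (hP : carpetEq P) : ∫ x : E2, |2*x 0 - 1| ∂P = 2/3 := by
  have key := int_transform P hP continuous_abs01 (integrable_abs01 P hP)
  have hae := ae_unitSq P hP
  have hk : ∀ k : Fin 4, ∫ x : E2, |2*(S k x) 0 - 1| ∂P = 2/3 := by
    intro k
    rcases cS_cases k 0 with hc | hc
    · have he : ∫ x : E2, |2*(S k x) 0 - 1| ∂P = ∫ x : E2, (1 - (2/3)*x 0) ∂P := by
        refine integral_congr_ae (hae.mono fun x hx => ?_)
        have h := hx 0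
        simp only [S_apply, hc, add_zero]
        rw [abs_of_nonpos (by linarith [h.2])]
        ring
      rw [he, integral_sub (integrable_const _) ((integrable_coord P hP 0).const_mul _),
        integral_const_mul, integral_const, moment1_0 P hP]
      simp [measure_univ]
      norm_num
    · have he : ∫ x : E2, |2*(S k x) 0 - 1| ∂P = ∫ x : E2, ((2/3)*x 0 + 1/3) ∂P := by
        refine integral_congr_ae (hae.mono fun x hx => ?_)
        have h := hx 0
        simp only [S_apply, hc]
        rw [abs_of_nonneg (by linarith [h.1])]
        ring
      rw [he, integral_add ((integrable_coord P hP 0).const_mul _) (integrable_const _),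
        integral_const_mul, integral_const, moment1_0 P hP]
      simp [measure_univ]
      norm_num
  rw [hk 0, hk 1, hk 2, hk 3] at key
  linarith

def pt0 (a b : ℝ) : pt a b 0 = a := rfl
def pt1 (a b : ℝ) : pt a b 1 = b := rfl

lemma normsq (x y : E2) : ‖x - y‖^2 = (x 0 - y 0)^2 + (x 1 - y 1)^2 := by
  rw [EuclideanSpace.norm_eq, Real.sq_sqrt (by positivity)]
  have h0 : (x - y) 0 = x 0 - y 0 := rfl
  have h1 : (x - y) 1 = x 1 - y 1 := rfl
  rw [Fin.sum_univ_two, h0, h1, Real.norm_eq_abs, Real.norm_eq_abs, sq_abs, sq_abs]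

lemma min_identity (x : E2) :
    min (‖x - pt (1/6) (3/4)‖^2) (‖x - pt (5/6) (3/4)‖^2)
    = (x 0)^2 - x 0 + (x 1)^2 - (3/2)*(x 1) + 13/36 + 9/16 - (1/3)*|2*(x 0) - 1| := by
  rw [normsq, normsq, pt0, pt0, pt1, pt1]
  rcases le_total (x 0) (1/2) with h | h
  · rw [min_eq_left (by nlinarith), abs_of_nonpos (by linarith)]
    ring
  · rw [min_eq_right (by nlinarith), abs_of_nonneg (by linarith)]
    ring


theorem distortion_two_points (P : Measure E2) [IsProbabilityMeasure P] (hP : carpetEq P) :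
    ∫ x : E2, min (‖x - pt (1/6) (3/4)‖^2) (‖x - pt (5/6) (3/4)‖^2) ∂P = 31/288 := by
  have i20 := integrable_coord_sq P hP 0
  have i21 := integrable_coord_sq P hP 1
  have i10 := integrable_coord P hP 0
  have i11 := integrable_coord P hP 1
  have iab : Integrable (fun x : E2 => (1/3)*|2*(x 0) - 1|) P :=
    (integrable_abs01 P hP).const_mul _
  have e1 : Integrable (fun x : E2 => (x 0)^2 - x 0) P := i20.sub i10
  have e2 : Integrable (fun x : E2 => (x 0)^2 - x 0 + (x 1)^2) P := e1.add i21
  have e3 : Integrable (fun x : E2 => (x 0)^2 - x 0 + (x 1)^2 - (3/2)*(x 1)) P :=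
    e2.sub (i11.const_mul _)
  have e4 : Integrable (fun x : E2 => (x 0)^2 - x 0 + (x 1)^2 - (3/2)*(x 1) + 13/36) P :=
    e3.add (integrable_const _)
  have e5 : Integrable (fun x : E2 => (x 0)^2 - x 0 + (x 1)^2 - (3/2)*(x 1) + 13/36 + 9/16) P :=
    e4.add (integrable_const _)
  simp only [min_identity]
  rw [integral_sub e5 iab, integral_add e4 (integrable_const _),
    integral_add e3 (integrable_const _), integral_sub e2 (i11.const_mul _),
    integral_add e1 i21, integral_sub i20 i10, integral_const_mul, integral_const_mul,
    integral_const, integral_const, moment2_0 P hP, moment1_0 P hP, moment2_1 P hP,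
    moment1_1 P hP, momentA P hP]
  simp [measure_univ]
  norm_num
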